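/- arXiv:1804.05437 — 3 statements merged into one kernel-verified Lean document; each statement's English description precedes it below -/
import Mathlib

section
/- Let q ≠ 0 and r be real numbers. For every nonnegative integer n, ĉ_n^q(−r) = ∑_{k=0}^n ∑_{j=0}^k (1 / k!) w(n,k) w(k,j) B_j^q(r). -/
/-- The falling factorial `(x)_k = x(x-1)⋯(x-k+1)`. -/
noncomputable def fallFac (x : ℝ) (k : ℕ) : ℝ := ∏ i ∈ Finset.range k, (x - i)

/-- The generalized falling factorial `(x|q)_k = x(x-q)⋯(x-(k-1)q)`. -/
noncomputable def genFallFac (q x : ℝ) (k : ℕ) : ℝ := ∏ i ∈ Finset.range k, (x - i * q)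

/-- The Cauchy polynomials with a `q` parameter of the second kind:
`ĉ_n^q(z) = ∫_0^1 (−x + z | q)_n dx`. -/
noncomputable def cauchySecond (q z : ℝ) (n : ℕ) : ℝ := ∫ x in (0:ℝ)..1, genFallFac q (-x + z) n

lemma fallFac_nat_self (m : ℕ) : fallFac (m : ℝ) m = m.factorial := by
  induction m with
  | zero => simp [fallFac]
  | succ m ih =>
    rw [fallFac, Finset.prod_range_succ']
    have h1 : ∀ i ∈ Finset.range m, (((m+1 : ℕ) : ℝ) - ((i+1 : ℕ) : ℝ)) = ((m : ℝ) - (i : ℕ)) := by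
      intro i _; push_cast; ring
    rw [Finset.prod_congr rfl h1]
    rw [show (∏ i ∈ Finset.range m, ((m:ℝ) - (i:ℕ))) = fallFac m m from rfl, ih]
    push_cast [Nat.factorial_succ]; ring

lemma fallFac_nat_eq_zero {m i : ℕ} (h : m < i) : fallFac (m : ℝ) i = 0 := by
  apply Finset.prod_eq_zero (Finset.mem_range.mpr h); simp

lemma triangular (N : ℕ) (d : ℕ → ℝ)
    (h : ∀ x : ℝ, ∑ i ∈ Finset.range N, d i * fallFac x i = 0) :
    ∀ i, i < N → d i = 0 := by
  intro i
  induction i using Nat.strong_induction_on with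
  | _ i ih =>
    intro hiN
    have h0 := h (i : ℝ)
    rw [Finset.sum_eq_single i] at h0
    · rw [fallFac_nat_self] at h0
      rcases mul_eq_zero.mp h0 with h1 | h1
      · exact h1
      · exact absurd h1 (Nat.cast_ne_zero.mpr i.factorial_ne_zero)
    · intro b hb hbi
      rcases lt_or_gt_of_ne hbi with hlt | hgt
      · rw [ih b hlt (lt_trans hlt hiN)]; ring
      · rw [fallFac_nat_eq_zero hgt]; ring
    · intro hni; exact absurd (Finset.mem_range.mpr hiN) hni

/-- `ĉ_n^q(−r) = ∑_{k=0}^n ∑_{j=0}^k (1/k!) w(n,k) w(k,j) B_j^q(r)`. -/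
theorem cauchySecond_eq_double_sum_bernoulli_q (q r : ℝ) (hq : q ≠ 0)
    (W : ℕ → ℕ → ℝ)
    (hW0 : ∀ n k, n < k → W n k = 0)
    (hW : ∀ n : ℕ, ∀ x : ℝ, (q * x + r) ^ n =
      ∑ k ∈ Finset.range (n + 1), q ^ k * W n k * fallFac x k)
    (w : ℕ → ℕ → ℝ)
    (hw0 : ∀ n k, n < k → w n k = 0)
    (hw : ∀ n : ℕ, ∀ x : ℝ, q ^ n * fallFac x n =
      ∑ k ∈ Finset.range (n + 1), w n k * (q * x + r) ^ k)
    (B : ℕ → ℝ)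
    (hB : ∀ n, B n = ∑ k ∈ Finset.range (n + 1),
      (-1 : ℝ) ^ k * ((k.factorial : ℝ) / ((k : ℝ) + 1)) * W n k)
    (n : ℕ) :
    cauchySecond q (-r) n = ∑ k ∈ Finset.range (n + 1), ∑ j ∈ Finset.range (k + 1),
      (1 / (k.factorial : ℝ)) * w n k * w k j * B j := by
  -- extended version of hW : sum over range (k+1) for any j ≤ k
  have hWext : ∀ k j, j ≤ k → ∀ x : ℝ,
      ∑ i ∈ Finset.range (k+1), q ^ i * W j i * fallFac x i = (q * x + r) ^ j := by
    intro k j hj x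
    rw [hW j x]
    symm
    apply Finset.sum_subset (Finset.range_subset_range.mpr (by omega))
    intro i hi hni
    have : j < i := by
      simp only [Finset.mem_range] at hi hni; omega
    rw [hW0 j i this]; ring
  set c : ℕ → ℕ → ℝ := fun k i => ∑ j ∈ Finset.range (k+1), w k j * W j i with hc_def
  -- the combination ∑_j w k j W j i expands q^k (x)_k in falling factorials
  have key : ∀ k, ∀ x : ℝ,
      ∑ i ∈ Finset.range (k+1), (q ^ i * c k i) * fallFac x i = q ^ k * fallFac x k := by
    intro k x
    have h1 : ∀ i ∈ Finset.range (k+1), (q ^ i * c k i) * fallFac x i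
        = ∑ j ∈ Finset.range (k+1), w k j * (q ^ i * W j i * fallFac x i) := by
      intro i _
      rw [hc_def]
      simp only [Finset.sum_mul, Finset.mul_sum]
      apply Finset.sum_congr rfl; intro j _; ring
    rw [Finset.sum_congr rfl h1, Finset.sum_comm]
    have h2 : ∀ j ∈ Finset.range (k+1),
        ∑ i ∈ Finset.range (k+1), w k j * (q ^ i * W j i * fallFac x i)
        = w k j * (q * x + r) ^ j := by
      intro j hj
      rw [← Finset.mul_sum, hWext k j (by simp only [Finset.mem_range] at hj; omega)]
    rw [Finset.sum_congr rfl h2]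
    exact (hw k x).symm
  -- orthogonality
  have horth : ∀ k, ∀ i ≤ k, c k i = if i = k then 1 else 0 := by
    intro k i hik
    have hzero : ∀ x : ℝ, ∑ i ∈ Finset.range (k+1),
        (q ^ i * c k i - (if i = k then q ^ k else 0)) * fallFac x i = 0 := by
      intro x
      simp only [sub_mul, Finset.sum_sub_distrib, key k x, ite_mul, zero_mul]
      rw [Finset.sum_ite_eq' (Finset.range (k+1)) k (fun i => q ^ k * fallFac x i)]
      simp
    have hd := triangular (k+1) _ hzero i (by omega)
    have hd' : q ^ i * c k i = (if i = k then q ^ k else 0) := by linarith [hd]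
    by_cases hik' : i = k
    · subst hik'
      rw [if_pos rfl] at hd' ⊢
      have h5 : q ^ i * c i i = q ^ i * 1 := by rw [hd']; ring
      exact mul_left_cancel₀ (pow_ne_zero i hq) h5
    · simp only [if_neg hik'] at hd' ⊢
      rcases mul_eq_zero.mp hd' with h | h
      · exact absurd h (pow_ne_zero i hq)
      · exact h
  -- inner Bernoulli sum collapses
  have hBsum : ∀ k, ∑ j ∈ Finset.range (k+1), w k j * B j
      = (-1 : ℝ) ^ k * ((k.factorial : ℝ) / ((k : ℝ) + 1)) := by
    intro k
    have hBext : ∀ j ∈ Finset.range (k+1), w k j * B j =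
        ∑ i ∈ Finset.range (k+1),
          w k j * ((-1 : ℝ) ^ i * ((i.factorial : ℝ) / ((i : ℝ) + 1)) * W j i) := by
      intro j hj
      rw [hB j, Finset.mul_sum]
      apply Finset.sum_subset (Finset.range_subset_range.mpr (by
        simp only [Finset.mem_range] at hj; omega))
      intro i hi hni
      have : j < i := by simp only [Finset.mem_range] at hi hni; omega
      rw [hW0 j i this]; ring
    rw [Finset.sum_congr rfl hBext, Finset.sum_comm]
    have h3 : ∀ i ∈ Finset.range (k+1),
        ∑ j ∈ Finset.range (k+1),
          w k j * ((-1 : ℝ) ^ i * ((i.factorial : ℝ) / ((i : ℝ) + 1)) * W j i)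
        = (-1 : ℝ) ^ i * ((i.factorial : ℝ) / ((i : ℝ) + 1)) * c k i := by
      intro i _
      rw [hc_def, Finset.mul_sum]
      apply Finset.sum_congr rfl; intro j _; ring
    rw [Finset.sum_congr rfl h3, Finset.sum_eq_single k]
    · rw [horth k k le_rfl]; simp
    · intro b hb hbk
      rw [horth k b (by simp only [Finset.mem_range] at hb; omega)]
      simp [hbk]
    · intro h; exact absurd (Finset.self_mem_range_succ k) h
  -- pointwise expansion of the integrand
  have hpt : ∀ x : ℝ, genFallFac q (-x + -r) n
      = ∑ j ∈ Finset.range (n+1), w n j * (-x) ^ j := by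
    intro x
    have h1 := hw n ((-x - r)/q)
    have e1 : q * ((-x - r)/q) + r = -x := by field_simp; ring
    rw [e1] at h1
    have e2 : q ^ n * fallFac ((-x - r)/q) n = genFallFac q (-x + -r) n := by
      rw [fallFac, genFallFac]
      rw [show q ^ n = ∏ _i ∈ Finset.range n, q by
        rw [Finset.prod_const, Finset.card_range]]
      rw [← Finset.prod_mul_distrib]
      apply Finset.prod_congr rfl
      intro i _
      field_simp; ring
    rw [← e2, h1]
  -- integrate
  have hint : cauchySecond q (-r) n
      = ∑ j ∈ Finset.range (n+1), w n j * ((-1 : ℝ) ^ j / ((j : ℝ) + 1)) := by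
    rw [cauchySecond]
    rw [intervalIntegral.integral_congr
      (g := fun x => ∑ j ∈ Finset.range (n+1), w n j * (-x) ^ j) (fun x _ => hpt x)]
    rw [intervalIntegral.integral_finset_sum]
    · apply Finset.sum_congr rfl
      intro j _
      have : (fun x : ℝ => w n j * (-x) ^ j) = fun x : ℝ => (w n j * (-1 : ℝ) ^ j) * x ^ j := by
        funext x; rw [neg_pow]; ring
      rw [this, intervalIntegral.integral_const_mul, integral_pow]
      rw [one_pow, zero_pow (Nat.succ_ne_zero j)]
      push_cast
      ring
    · intro j _
      apply Continuous.intervalIntegrable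
      continuity
  rw [hint]
  apply Finset.sum_congr rfl
  intro k _
  have h4 : ∀ j ∈ Finset.range (k+1),
      (1 / (k.factorial : ℝ)) * w n k * w k j * B j
      = (1 / (k.factorial : ℝ)) * w n k * (w k j * B j) := by
    intro j _; ring
  rw [Finset.sum_congr rfl h4, ← Finset.mul_sum, hBsum k]
  have hkf : (k.factorial : ℝ) ≠ 0 := Nat.cast_ne_zero.mpr k.factorial_ne_zero
  have hk1 : ((k : ℝ) + 1) ≠ 0 := by positivity
  field_simp
end

section
/- Let r be a real number and take q = 1. For every nonnegative integer n, B_n^1(r) equals the classical Bernoulli polynomial B_n evaluated at r (the polynomial satisfying the generating function ∑_{n=0}^∞ B_n(r) t^n/n! = t e^{rt}/(e^t − 1), as in Mathlib's Polynomial.bernoulli). -/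
lemma fallFac_zero (x : ℝ) : fallFac x 0 = 1 := by simp [fallFac]

lemma fallFac_succ (x : ℝ) (k : ℕ) : fallFac x (k + 1) = fallFac x k * (x - k) := by
  simp [fallFac, Finset.prod_range_succ]

lemma fallFac_succ' (x : ℝ) (k : ℕ) : fallFac x (k + 1) = x * fallFac (x - 1) k := by
  rw [fallFac, Finset.prod_range_succ', fallFac, mul_comm]
  congr 1
  · push_cast; ring
  · apply Finset.prod_congr rfl
    intro i _
    push_cast; ring

lemma fallFac_add_one (x : ℝ) (k : ℕ) :
    fallFac (x + 1) (k + 1) = fallFac x (k + 1) + (k + 1) * fallFac x k := by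
  rw [fallFac_succ' (x + 1) k, add_sub_cancel_right, fallFac_succ]
  ring

lemma fallFac_nat_self_s9 (k : ℕ) : fallFac (k : ℝ) k = k.factorial := by
  induction k with
  | zero => simp [fallFac]
  | succ k ih =>
    have : ((k + 1 : ℕ) : ℝ) = (k : ℝ) + 1 := by push_cast; ring
    rw [this, fallFac_succ', add_sub_cancel_right, ih, Nat.factorial_succ]
    push_cast; ring

lemma fallFac_nat_lt {m k : ℕ} (h : m < k) : fallFac (m : ℝ) k = 0 :=
  Finset.prod_eq_zero (Finset.mem_range.2 h) (by simp)

lemma fallFac_zero_succ (k : ℕ) : fallFac 0 (k + 1) = 0 := by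
  rw [fallFac_succ', zero_mul]

lemma fallFac_neg_one (k : ℕ) : fallFac (-1 : ℝ) k = (-1) ^ k * k.factorial := by
  induction k with
  | zero => simp [fallFac]
  | succ k ih =>
    rw [fallFac_succ, ih, Nat.factorial_succ]
    push_cast; ring

lemma continuous_fallFac (k : ℕ) : Continuous fun x : ℝ => fallFac x k := by
  unfold fallFac
  exact continuous_finset_prod _ fun i _ => by fun_prop

/-- Uniqueness: a vanishing combination of falling factorials has zero coefficients. -/
lemma fallFac_sum_eq_zero {N : ℕ} (a : ℕ → ℝ)
    (h : ∀ x : ℝ, ∑ k ∈ Finset.range N, a k * fallFac x k = 0) :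
    ∀ k, k < N → a k = 0 := by
  intro k
  induction k using Nat.strong_induction_on with
  | _ k ih =>
    intro hk
    have h1 := h (k : ℝ)
    have h2 : ∑ m ∈ Finset.range N, a m * fallFac (k : ℝ) m = a k * fallFac (k : ℝ) k := by
      apply Finset.sum_eq_single
      · intro m _ hmk
        rcases lt_or_gt_of_ne hmk with hlt | hgt
        · rw [ih m hlt (hlt.trans hk), zero_mul]
        · rw [fallFac_nat_lt hgt, mul_zero]
      · intro hknot
        exact absurd (Finset.mem_range.2 hk) hknot
    rw [h2, fallFac_nat_self_s9] at h1
    have hf : (k.factorial : ℝ) ≠ 0 := Nat.cast_ne_zero.2 k.factorial_ne_zero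
    exact (mul_eq_zero.1 h1).resolve_right hf

/-- for `q = 1`, the Bernoulli polynomials with a `q` parameter reduce to
the classical Bernoulli polynomials: `B_n^1(r) = B_n(r)` (Mathlib's
`Polynomial.bernoulli`, evaluated at `r`). -/
theorem bernoulli_q_one_eq_bernoulli (r : ℝ)
    (W : ℕ → ℕ → ℝ)
    (hW0 : ∀ n k, n < k → W n k = 0)
    (hW : ∀ n : ℕ, ∀ x : ℝ, ((1 : ℝ) * x + r) ^ n =
      ∑ k ∈ Finset.range (n + 1), (1 : ℝ) ^ k * W n k * fallFac x k)
    (B : ℕ → ℝ)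
    (hB : ∀ n, B n = ∑ k ∈ Finset.range (n + 1),
      (-1 : ℝ) ^ k * ((k.factorial : ℝ) / ((k : ℝ) + 1)) * W n k)
    (n : ℕ) :
    B n = Polynomial.aeval r (Polynomial.bernoulli n) := by
  -- clean form of hW
  have hW' : ∀ (m : ℕ) (x : ℝ), (x + r) ^ m =
      ∑ k ∈ Finset.range (m + 1), W m k * fallFac x k := by
    intro m x
    simpa using hW m x
  -- extended range version
  have hWext : ∀ (m N : ℕ), m < N → ∀ x : ℝ, (x + r) ^ m =
      ∑ k ∈ Finset.range N, W m k * fallFac x k := by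
    intro m N hmN x
    rw [hW' m x]
    apply Finset.sum_subset (Finset.range_subset_range.2 hmN)
    intro k _ hk
    rw [hW0 m k (by simpa using hk), zero_mul]
  -- W m 0 = r ^ m
  have hW00 : ∀ m : ℕ, W m 0 = r ^ m := by
    intro m
    have h := hW' m 0
    rw [Finset.sum_range_succ'] at h
    simp only [fallFac_zero_succ, mul_zero, Finset.sum_const_zero, zero_add, fallFac_zero,
      mul_one] at h
    linarith [h]
  -- key coefficient identity
  have hA : ∀ (N k : ℕ), k < N + 2 →
      ∑ m ∈ Finset.range (N + 2), ((N + 1).choose m : ℝ) * W m k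
        = W (N + 1) k + ((k : ℝ) + 1) * W (N + 1) (k + 1) := by
    intro N
    have hzero : ∀ x : ℝ, ∑ k ∈ Finset.range (N + 2),
        ((∑ m ∈ Finset.range (N + 2), ((N + 1).choose m : ℝ) * W m k)
          - (W (N + 1) k + ((k : ℝ) + 1) * W (N + 1) (k + 1))) * fallFac x k = 0 := by
      intro x
      have e1 : ∑ k ∈ Finset.range (N + 2),
          (∑ m ∈ Finset.range (N + 2), ((N + 1).choose m : ℝ) * W m k) * fallFac x k
          = (x + 1 + r) ^ (N + 1) := by
        calc ∑ k ∈ Finset.range (N + 2),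
              (∑ m ∈ Finset.range (N + 2), ((N + 1).choose m : ℝ) * W m k) * fallFac x k
            = ∑ k ∈ Finset.range (N + 2), ∑ m ∈ Finset.range (N + 2),
                ((N + 1).choose m : ℝ) * (W m k * fallFac x k) := by
              apply Finset.sum_congr rfl; intro k _
              rw [Finset.sum_mul]; apply Finset.sum_congr rfl; intro m _; ring
          _ = ∑ m ∈ Finset.range (N + 2), ((N + 1).choose m : ℝ) *
                ∑ k ∈ Finset.range (N + 2), W m k * fallFac x k := by
              rw [Finset.sum_comm]
              apply Finset.sum_congr rfl; intro m _
              rw [Finset.mul_sum]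
          _ = ∑ m ∈ Finset.range (N + 2), ((N + 1).choose m : ℝ) * (x + r) ^ m := by
              apply Finset.sum_congr rfl; intro m hm
              rw [← hWext m (N + 2) (Finset.mem_range.1 hm) x]
          _ = (x + 1 + r) ^ (N + 1) := by
              have h := add_pow (x + r) 1 (N + 1)
              simp only [one_pow, mul_one] at h
              rw [show x + 1 + r = x + r + 1 by ring, h]
              apply Finset.sum_congr rfl; intro m _; ring
      have e2 : ∑ k ∈ Finset.range (N + 2),
          (W (N + 1) k + ((k : ℝ) + 1) * W (N + 1) (k + 1)) * fallFac x k
          = (x + 1 + r) ^ (N + 1) := by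
        have e3 : ∑ k ∈ Finset.range (N + 2),
            (W (N + 1) k + ((k : ℝ) + 1) * W (N + 1) (k + 1)) * fallFac x k
            = ∑ k ∈ Finset.range (N + 2), W (N + 1) k * fallFac x k
              + ∑ k ∈ Finset.range (N + 2), ((k : ℝ) + 1) * W (N + 1) (k + 1) * fallFac x k := by
          rw [← Finset.sum_add_distrib]
          apply Finset.sum_congr rfl; intro k _; ring
        have e4 : ∑ k ∈ Finset.range (N + 2), ((k : ℝ) + 1) * W (N + 1) (k + 1) * fallFac x k
            = ∑ k ∈ Finset.range (N + 1), ((k : ℝ) + 1) * W (N + 1) (k + 1) * fallFac x k := by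
          rw [Finset.sum_range_succ, hW0 (N + 1) (N + 1 + 1) (by omega)]
          ring
        have e5 : ∑ k ∈ Finset.range (N + 2), W (N + 1) k * fallFac x k
            = ∑ k ∈ Finset.range (N + 1), W (N + 1) (k + 1) * fallFac x (k + 1)
              + W (N + 1) 0 := by
          rw [Finset.sum_range_succ']
          simp [fallFac_zero]
        calc ∑ k ∈ Finset.range (N + 2),
              (W (N + 1) k + ((k : ℝ) + 1) * W (N + 1) (k + 1)) * fallFac x k
            = (∑ k ∈ Finset.range (N + 1), (W (N + 1) (k + 1) * fallFac x (k + 1)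
                + ((k : ℝ) + 1) * W (N + 1) (k + 1) * fallFac x k)) + W (N + 1) 0 := by
              rw [e3, e4, e5, Finset.sum_add_distrib]
              ring
          _ = (∑ k ∈ Finset.range (N + 1), W (N + 1) (k + 1) * fallFac (x + 1) (k + 1))
                + W (N + 1) 0 * fallFac (x + 1) 0 := by
              rw [fallFac_zero, mul_one]
              congr 1
              apply Finset.sum_congr rfl
              intro k _
              rw [fallFac_add_one]
              ring
          _ = ∑ k ∈ Finset.range (N + 2), W (N + 1) k * fallFac (x + 1) k := by
              rw [Finset.sum_range_succ' (fun k => W (N + 1) k * fallFac (x + 1) k) (N + 1)]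
          _ = (x + 1 + r) ^ (N + 1) := by
              rw [show x + 1 + r = (x + 1) + r by ring, hW' (N + 1) (x + 1)]
      simp only [sub_mul]
      rw [Finset.sum_sub_distrib, e1, e2, sub_self]
    intro k hk
    have h := fallFac_sum_eq_zero _ hzero k hk
    linarith [h]
  -- the evaluation at the removable singularity: ∑ (-1)^k k! W(N+1,k+1) = (N+1) r^N
  have hKey2 : ∀ N : ℕ, ∑ k ∈ Finset.range (N + 2),
      (-1 : ℝ) ^ k * (k.factorial : ℝ) * W (N + 1) (k + 1) = ((N : ℝ) + 1) * r ^ N := by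
    intro N
    set g : ℝ → ℝ := fun x => ∑ k ∈ Finset.range (N + 2),
      W (N + 1) (k + 1) * fallFac (x - 1) k with hgdef
    set φ : ℝ → ℝ := fun x => ∑ j ∈ Finset.range (N + 1),
      ((N + 1).choose (j + 1) : ℝ) * r ^ (N - j) * x ^ j with hφdef
    have hgred : ∀ x : ℝ, g x = ∑ k ∈ Finset.range (N + 1),
        W (N + 1) (k + 1) * fallFac (x - 1) k := by
      intro x
      rw [hgdef]
      simp only
      rw [Finset.sum_range_succ, hW0 (N + 1) (N + 1 + 1) (by omega), zero_mul, add_zero]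
    have hgx : ∀ x : ℝ, x * g x = (x + r) ^ (N + 1) - r ^ (N + 1) := by
      intro x
      have h1 := hW' (N + 1) x
      rw [Finset.sum_range_succ'] at h1
      simp only [fallFac_zero, mul_one] at h1
      rw [hgred x, Finset.mul_sum, hW00 (N + 1)] at *
      rw [h1]
      have : ∀ k ∈ Finset.range (N + 1),
          x * (W (N + 1) (k + 1) * fallFac (x - 1) k)
            = W (N + 1) (k + 1) * fallFac x (k + 1) := by
        intro k _
        rw [fallFac_succ']
        ring
      rw [Finset.sum_congr rfl this]
      ring
    have hφx : ∀ x : ℝ, x * φ x = (x + r) ^ (N + 1) - r ^ (N + 1) := by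
      intro x
      have h1 := add_pow x r (N + 1)
      rw [Finset.sum_range_succ'] at h1
      simp only [pow_zero, one_mul, Nat.sub_zero, Nat.choose_zero_right, Nat.cast_one,
        mul_one] at h1
      rw [hφdef]
      simp only
      rw [Finset.mul_sum, h1]
      have : ∀ j ∈ Finset.range (N + 1),
          x * (((N + 1).choose (j + 1) : ℝ) * r ^ (N - j) * x ^ j)
            = x ^ (j + 1) * r ^ (N + 1 - (j + 1)) * ((N + 1).choose (j + 1) : ℝ) := by
        intro j hj
        rw [Nat.succ_sub_succ]
        ring
      rw [Finset.sum_congr rfl this]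
      ring
    have hcontg : Continuous g := by
      rw [hgdef]
      apply continuous_finset_sum
      intro k _
      exact Continuous.mul continuous_const ((continuous_fallFac k).comp (by fun_prop))
    have hcontφ : Continuous φ := by
      rw [hφdef]
      apply continuous_finset_sum
      intro j _
      fun_prop
    have hgφ : g = φ := by
      apply Continuous.ext_on (dense_compl_singleton (0 : ℝ)) hcontg hcontφ
      intro x hx
      have hx0 : x ≠ 0 := hx
      exact mul_left_cancel₀ hx0 ((hgx x).trans (hφx x).symm)
    have h0 := congrFun hgφ 0
    have hg0 : g 0 = ∑ k ∈ Finset.range (N + 2),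
        (-1 : ℝ) ^ k * (k.factorial : ℝ) * W (N + 1) (k + 1) := by
      rw [hgdef]
      simp only
      apply Finset.sum_congr rfl
      intro k _
      rw [show (0 : ℝ) - 1 = -1 by ring, fallFac_neg_one]
      ring
    have hφ0 : φ 0 = ((N : ℝ) + 1) * r ^ N := by
      rw [hφdef]
      simp only
      rw [Finset.sum_eq_single 0]
      · simp [Nat.choose_one_right]
      · intro j _ hj
        rw [zero_pow hj, mul_zero]
      · intro h
        exact absurd (Finset.mem_range.2 (by omega)) h
    rw [← hg0, h0, hφ0]
  -- the recurrence satisfied by B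
  have key : ∀ N : ℕ, ∑ m ∈ Finset.range (N + 1), ((N + 1).choose m : ℝ) * B m
      = ((N : ℝ) + 1) * r ^ N := by
    intro N
    -- extended version of hB
    have hBe : ∀ m, m < N + 2 → B m = ∑ k ∈ Finset.range (N + 2),
        (-1 : ℝ) ^ k * ((k.factorial : ℝ) / ((k : ℝ) + 1)) * W m k := by
      intro m hm
      rw [hB m]
      apply Finset.sum_subset (Finset.range_subset_range.2 hm)
      intro k _ hk
      rw [hW0 m k (by simpa using hk), mul_zero]
    have hfull : ∑ m ∈ Finset.range (N + 2), ((N + 1).choose m : ℝ) * B m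
        = B (N + 1) + ((N : ℝ) + 1) * r ^ N := by
      calc ∑ m ∈ Finset.range (N + 2), ((N + 1).choose m : ℝ) * B m
          = ∑ m ∈ Finset.range (N + 2), ∑ k ∈ Finset.range (N + 2),
              ((-1 : ℝ) ^ k * ((k.factorial : ℝ) / ((k : ℝ) + 1))) *
                (((N + 1).choose m : ℝ) * W m k) := by
            apply Finset.sum_congr rfl
            intro m hm
            rw [hBe m (Finset.mem_range.1 hm), Finset.mul_sum]
            apply Finset.sum_congr rfl; intro k _; ring
        _ = ∑ k ∈ Finset.range (N + 2),
              ((-1 : ℝ) ^ k * ((k.factorial : ℝ) / ((k : ℝ) + 1))) *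
                ∑ m ∈ Finset.range (N + 2), ((N + 1).choose m : ℝ) * W m k := by
            rw [Finset.sum_comm]
            apply Finset.sum_congr rfl; intro k _
            rw [Finset.mul_sum]
        _ = ∑ k ∈ Finset.range (N + 2),
              ((-1 : ℝ) ^ k * ((k.factorial : ℝ) / ((k : ℝ) + 1))) *
                (W (N + 1) k + ((k : ℝ) + 1) * W (N + 1) (k + 1)) := by
            apply Finset.sum_congr rfl
            intro k hk
            rw [hA N k (Finset.mem_range.1 hk)]
        _ = (∑ k ∈ Finset.range (N + 2),
              (-1 : ℝ) ^ k * ((k.factorial : ℝ) / ((k : ℝ) + 1)) * W (N + 1) k)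
            + ∑ k ∈ Finset.range (N + 2),
              (-1 : ℝ) ^ k * (k.factorial : ℝ) * W (N + 1) (k + 1) := by
            rw [← Finset.sum_add_distrib]
            apply Finset.sum_congr rfl
            intro k _
            have hk1 : ((k : ℝ) + 1) ≠ 0 := by positivity
            field_simp
        _ = B (N + 1) + ((N : ℝ) + 1) * r ^ N := by
            rw [← hBe (N + 1) (by omega), hKey2 N]
    have hsplit : ∑ m ∈ Finset.range (N + 2), ((N + 1).choose m : ℝ) * B m
        = ∑ m ∈ Finset.range (N + 1), ((N + 1).choose m : ℝ) * B m + B (N + 1) := by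
      rw [Finset.sum_range_succ, Nat.choose_self]
      push_cast
      ring
    rw [hsplit] at hfull
    linarith [hfull]
  -- the same recurrence for the classical Bernoulli polynomials
  have keyB : ∀ N : ℕ, ∑ m ∈ Finset.range (N + 1),
      ((N + 1).choose m : ℝ) * Polynomial.aeval r (Polynomial.bernoulli m)
      = ((N : ℝ) + 1) * r ^ N := by
    intro N
    have h := congrArg (Polynomial.aeval r) (Polynomial.sum_bernoulli N)
    rw [map_sum] at h
    simp only [map_smul, Polynomial.aeval_monomial] at h
    rw [Finset.sum_congr rfl (fun m _ => by
      rw [Rat.smul_def]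
      push_cast
      ring : ∀ m ∈ Finset.range (N + 1), (((N + 1).choose m : ℚ) •
        Polynomial.aeval r (Polynomial.bernoulli m)) = ((N + 1).choose m : ℝ) *
        Polynomial.aeval r (Polynomial.bernoulli m))] at h
    rw [h]
    push_cast
    ring
  -- strong induction
  induction n using Nat.strong_induction_on with
  | _ n ih =>
    have h1 := key n
    have h2 := keyB n
    rw [Finset.sum_range_succ] at h1 h2
    have h3 : ∑ m ∈ Finset.range n, ((n + 1).choose m : ℝ) * B m
        = ∑ m ∈ Finset.range n, ((n + 1).choose m : ℝ) *
            Polynomial.aeval r (Polynomial.bernoulli m) := by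
      apply Finset.sum_congr rfl
      intro m hm
      rw [ih m (Finset.mem_range.1 hm)]
    have h4 : ((n + 1).choose n : ℝ) * B n
        = ((n + 1).choose n : ℝ) * Polynomial.aeval r (Polynomial.bernoulli n) := by
      linarith [h1, h2, h3]
    have hC : ((n + 1).choose n : ℝ) ≠ 0 := by
      rw [Nat.choose_succ_self_right]
      positivity
    exact mul_left_cancel₀ hC h4
end

section
/- Let q ≠ 0 and r be real numbers. For every nonnegative integer n, ∑_{k=0}^n W(n,k) c_k^q(r) = 1/(n+1). -/
/-- The Cauchy polynomials with a `q` parameter of the first kind: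
`c_n^q(z) = ∫_0^1 (x − z | q)_n dx`. -/
noncomputable def cauchyFirst (q z : ℝ) (n : ℕ) : ℝ := ∫ x in (0:ℝ)..1, genFallFac q (x - z) n

lemma genFallFac_eq (q y : ℝ) (hq : q ≠ 0) (k : ℕ) :
    genFallFac q y k = q ^ k * fallFac (y / q) k := by
  unfold genFallFac fallFac
  have hpow : q ^ k = ∏ _i ∈ Finset.range k, q := by simp
  rw [hpow, ← Finset.prod_mul_distrib]
  apply Finset.prod_congr rfl
  intro i _
  field_simp

lemma genFallFac_cont (q z : ℝ) (k : ℕ) :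
    Continuous (fun x => genFallFac q (x - z) k) := by
  unfold genFallFac
  exact continuous_finset_prod _ fun i _ => by continuity

/-- `∑_{k=0}^n W(n,k) c_k^q(r) = 1/(n+1)`. -/
theorem whitneySecond_mul_cauchyFirst_sum (q r : ℝ) (hq : q ≠ 0)
    (W : ℕ → ℕ → ℝ)
    (hW0 : ∀ n k, n < k → W n k = 0)
    (hW : ∀ n : ℕ, ∀ x : ℝ, (q * x + r) ^ n =
      ∑ k ∈ Finset.range (n + 1), q ^ k * W n k * fallFac x k)
    (n : ℕ) :
    ∑ k ∈ Finset.range (n + 1), W n k * cauchyFirst q r k = 1 / ((n : ℝ) + 1) := by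
  have key : ∑ k ∈ Finset.range (n + 1), W n k * cauchyFirst q r k
      = ∫ x in (0:ℝ)..1, ∑ k ∈ Finset.range (n + 1), W n k * genFallFac q (x - r) k := by
    rw [intervalIntegral.integral_finset_sum]
    · apply Finset.sum_congr rfl
      intro k _
      rw [cauchyFirst, ← intervalIntegral.integral_const_mul]
    · intro k _
      exact (Continuous.intervalIntegrable (by
        exact Continuous.mul continuous_const (genFallFac_cont q r k)) 0 1)
  rw [key]
  have heq : ∀ x : ℝ, ∑ k ∈ Finset.range (n + 1), W n k * genFallFac q (x - r) k
      = x ^ n := by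
    intro x
    have := hW n ((x - r) / q)
    rw [mul_div_cancel₀ _ hq] at this
    have h2 : x - r + r = x := by ring
    rw [h2] at this
    rw [this]
    apply Finset.sum_congr rfl
    intro k _
    rw [genFallFac_eq q (x - r) hq k]
    ring
  simp_rw [heq]
  rw [integral_pow]
  simp
end
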